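/- arXiv:2306.06660 — 2 statements merged into one kernel-verified Lean document; each statement's English description precedes it below -/
import Mathlib

section
/- For every z ∈ ℂ, with y = e^{2πiz}, the function φ_{0,1}(it, z)³ tends to y⁻³ + 30y⁻² + 303y⁻¹ + 1060 + 303y + 30y² + y³ as the real parameter t tends to +∞. -/
open Complex Filter Topology

/-- The Jacobi theta function θ₁. -/
noncomputable def theta1 (τ z : ℂ) : ℂ :=
  -Complex.I * ∑' n : ℤ, (-1 : ℂ) ^ n *
    Complex.exp (Real.pi * Complex.I * ((n : ℂ) + 1 / 2) ^ 2 * τ) *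
    Complex.exp (2 * Real.pi * Complex.I * ((n : ℂ) + 1 / 2) * z)

/-- The Jacobi theta function θ₂. -/
noncomputable def theta2 (τ z : ℂ) : ℂ :=
  ∑' n : ℤ, Complex.exp (Real.pi * Complex.I * ((n : ℂ) + 1 / 2) ^ 2 * τ) *
    Complex.exp (2 * Real.pi * Complex.I * ((n : ℂ) + 1 / 2) * z)

/-- The Jacobi theta function θ₃. -/
noncomputable def theta3 (τ z : ℂ) : ℂ :=
  ∑' n : ℤ, Complex.exp (Real.pi * Complex.I * (n : ℂ) ^ 2 * τ) *
    Complex.exp (2 * Real.pi * Complex.I * (n : ℂ) * z)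

/-- The Jacobi theta function θ₄. -/
noncomputable def theta4 (τ z : ℂ) : ℂ :=
  ∑' n : ℤ, (-1 : ℂ) ^ n * Complex.exp (Real.pi * Complex.I * (n : ℂ) ^ 2 * τ) *
    Complex.exp (2 * Real.pi * Complex.I * (n : ℂ) * z)

/-- The Dedekind eta function. -/
noncomputable def dedekindEta (τ : ℂ) : ℂ :=
  Complex.exp (Real.pi * Complex.I * τ / 12) *
    ∏' n : ℕ, (1 - Complex.exp (2 * Real.pi * Complex.I * ((n : ℂ) + 1) * τ))

/-- The weak Jacobi form φ_{0,1}. -/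
noncomputable def phi01 (τ z : ℂ) : ℂ :=
  4 * ((theta2 τ z / theta2 τ 0) ^ 2 + (theta3 τ z / theta3 τ 0) ^ 2 +
    (theta4 τ z / theta4 τ 0) ^ 2)

/-- The weak Jacobi form φ_{-2,1}. -/
noncomputable def phim21 (τ z : ℂ) : ℂ := -theta1 τ z ^ 2 / dedekindEta τ ^ 6

/-- The normalized Eisenstein series E₄. -/
noncomputable def E4 (τ : ℂ) : ℂ :=
  1 + 240 * ∑' n : ℕ, (∑ d ∈ (n + 1).divisors, (d : ℂ) ^ 3) *
    Complex.exp (2 * Real.pi * Complex.I * ((n : ℂ) + 1) * τ)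

/-- The normalized Eisenstein series E₆. -/
noncomputable def E6 (τ : ℂ) : ℂ :=
  1 - 504 * ∑' n : ℕ, (∑ d ∈ (n + 1).divisors, (d : ℂ) ^ 5) *
    Complex.exp (2 * Real.pi * Complex.I * ((n : ℂ) + 1) * τ)

/-- `IsWeakJacobiForm k M φ` means that `φ : ℂ → ℂ → ℂ` (viewed as a function of
`(τ, z)` on the domain `{τ : 0 < Im τ} × ℂ`) is a weak Jacobi form of weight `k`
and index `M / 2` (so `M` is twice the index, which is allowed to be half-integral):
it is holomorphic, satisfies the modular and elliptic transformation laws, and has a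
Fourier expansion `∑_{n ≥ 0} ∑_{r ∈ ℤ + M/2} c n r q^n y^r` with only
nonnegative powers of `q`. -/
def IsWeakJacobiForm (k M : ℤ) (φ : ℂ → ℂ → ℂ) : Prop :=
  DifferentiableOn ℂ (fun p : ℂ × ℂ => φ p.1 p.2) {p : ℂ × ℂ | 0 < p.1.im} ∧
  (∀ γ : Matrix.SpecialLinearGroup (Fin 2) ℤ, ∀ τ z : ℂ, 0 < τ.im →
    φ ((γ 0 0 * τ + γ 0 1) / (γ 1 0 * τ + γ 1 1)) (z / (γ 1 0 * τ + γ 1 1)) =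
      (γ 1 0 * τ + γ 1 1) ^ k *
        Complex.exp (Real.pi * Complex.I * M * (γ 1 0) * z ^ 2 / (γ 1 0 * τ + γ 1 1)) *
        φ τ z) ∧
  (∀ l μ : ℤ, ∀ τ z : ℂ, 0 < τ.im →
    φ τ (z + l * τ + μ) =
      (-1 : ℂ) ^ (M * (l + μ)) *
        Complex.exp (-(Real.pi * Complex.I * M) * ((l : ℂ) ^ 2 * τ + 2 * l * z)) * φ τ z) ∧
  (∃ c : ℕ → ℤ → ℂ, ∀ τ z : ℂ, 0 < τ.im →
    HasSum (fun p : ℕ × ℤ => c p.1 p.2 * Complex.exp (2 * Real.pi * Complex.I * (p.1 : ℂ) * τ) *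
      Complex.exp (Real.pi * Complex.I * (2 * (p.2 : ℂ) + M) * z)) (φ τ z))

/-- `IsModularForm k f` means that `f : ℂ → ℂ` (viewed as a function on the upper half
plane `{τ : 0 < Im τ}`) is a modular form of weight `k` for `SL₂(ℤ)`: it is holomorphic,
satisfies the modular transformation law, and is bounded as `Im τ → ∞`. -/
def IsModularForm (k : ℤ) (f : ℂ → ℂ) : Prop :=
  DifferentiableOn ℂ f {τ : ℂ | 0 < τ.im} ∧
  (∀ γ : Matrix.SpecialLinearGroup (Fin 2) ℤ, ∀ τ : ℂ, 0 < τ.im →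
    f ((γ 0 0 * τ + γ 0 1) / (γ 1 0 * τ + γ 1 1)) = (γ 1 0 * τ + γ 1 1) ^ k * f τ) ∧
  (∃ A C : ℝ, ∀ τ : ℂ, C ≤ τ.im → ‖f τ‖ ≤ A)


section PhiAux

open Complex Filter Topology

private lemma aux_tendsto (c : ℤ → ℂ) (a : ℤ → ℝ) (ha : ∀ n, 0 ≤ a n)
    (hb : Summable fun n : ℤ => ‖c n‖ * Real.exp (-a n)) (L : ℂ)
    (hL : HasSum (fun n : ℤ => if a n = 0 then c n else 0) L) :
    Tendsto (fun t : ℝ => ∑' n : ℤ, c n * (Real.exp (-a n * t) : ℂ)) atTop (𝓝 L) := by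
  rw [← hL.tsum_eq]
  apply tendsto_tsum_of_dominated_convergence hb
  · intro n
    rcases eq_or_lt_of_le (ha n) with h | h
    · simp only [← h, if_pos rfl, neg_zero, zero_mul, Real.exp_zero, ofReal_one, mul_one]
      exact tendsto_const_nhds
    · rw [if_neg (by linarith)]
      have h1 : Tendsto (fun t : ℝ => -a n * t) atTop atBot := by
        have := tendsto_neg_atTop_atBot.comp ((tendsto_const_mul_atTop_of_pos h).mpr tendsto_id)
        exact this.congr (fun x => (neg_mul _ _).symm)
      have h2 : Tendsto (fun t : ℝ => (Real.exp (-a n * t) : ℂ)) atTop (𝓝 0) := by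
        have := (Complex.continuous_ofReal.tendsto 0).comp (Real.tendsto_exp_atBot.comp h1)
        simpa only [Function.comp_def, Complex.ofReal_zero] using this
      simpa using tendsto_const_nhds.mul h2
  · filter_upwards [eventually_ge_atTop (1:ℝ)] with t ht n
    rw [norm_mul, Complex.norm_real, Real.norm_eq_abs, abs_of_pos (Real.exp_pos _)]
    apply mul_le_mul_of_nonneg_left _ (norm_nonneg _)
    apply Real.exp_le_exp.mpr
    nlinarith [ha n]

private lemma norm_cexp' (w : ℂ) : ‖cexp w‖ = Real.exp w.re := by
  rw [Complex.norm_exp]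

private lemma abs_le_aux (x y : ℝ) : -(x*y) ≤ |x| * |y| := by
  calc -(x*y) ≤ |(-(x*y))| := le_abs_self _
    _ = |x*y| := abs_neg _
    _ = |x| * |y| := abs_mul _ _

private lemma theta3_lim (z : ℂ) :
    Tendsto (fun t : ℝ => theta3 ((t:ℂ)*I) z) atTop (𝓝 1) := by
  have key := aux_tendsto (fun n : ℤ => cexp (2*(Real.pi:ℂ)*I*(n:ℂ)*z))
      (fun n : ℤ => Real.pi * (n:ℝ)^2) (fun n => by positivity) ?hb 1 ?hL
  case hb =>
    have hsum := summable_pow_mul_jacobiTheta₂_term_bound |z.im| one_pos 0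
    simp only [pow_zero, one_mul, Int.cast_abs] at hsum
    apply Summable.of_nonneg_of_le (fun n => by positivity) _ hsum
    intro n
    have hre : (2*(Real.pi:ℂ)*I*(n:ℂ)*z).re = -(2*Real.pi*n*z.im) := by
      simp [Complex.mul_re, Complex.mul_im]
    rw [norm_cexp', hre, ← Real.exp_add]
    apply Real.exp_le_exp.mpr
    have k1 : -((n:ℝ) * z.im) ≤ |(n:ℝ)| * |z.im| := abs_le_aux _ _
    nlinarith [mul_le_mul_of_nonneg_left k1 Real.pi_pos.le, Real.pi_pos]
  case hL =>
    have he : (fun n : ℤ => if Real.pi * (n:ℝ)^2 = 0 then cexp (2*(Real.pi:ℂ)*I*(n:ℂ)*z) else 0)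
        = fun n : ℤ => if n = 0 then (1:ℂ) else 0 := by
      funext n
      by_cases h : n = 0
      · subst h; simp
      · rw [if_neg, if_neg h]
        exact mul_ne_zero Real.pi_ne_zero (pow_ne_zero _ (by exact_mod_cast h))
    rw [he]
    exact hasSum_ite_eq 0 1
  refine Tendsto.congr (fun t => ?_) key
  rw [theta3]
  apply tsum_congr
  intro n
  have hexp : ((Real.exp (-(Real.pi * (n:ℝ)^2) * t) : ℝ) : ℂ) =
      cexp ((Real.pi:ℂ) * I * (n:ℂ)^2 * ((t:ℂ)*I)) := by
    rw [Complex.ofReal_exp]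
    congr 1
    push_cast
    linear_combination (-(Real.pi:ℂ)*(n:ℂ)^2*(t:ℂ)) * Complex.I_sq
  rw [hexp]
  ring

private lemma theta4_lim (z : ℂ) :
    Tendsto (fun t : ℝ => theta4 ((t:ℂ)*I) z) atTop (𝓝 1) := by
  have key := aux_tendsto (fun n : ℤ => (-1:ℂ)^n * cexp (2*(Real.pi:ℂ)*I*(n:ℂ)*z))
      (fun n : ℤ => Real.pi * (n:ℝ)^2) (fun n => by positivity) ?hb 1 ?hL
  case hb =>
    have hsum := summable_pow_mul_jacobiTheta₂_term_bound |z.im| one_pos 0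
    simp only [pow_zero, one_mul, Int.cast_abs] at hsum
    apply Summable.of_nonneg_of_le (fun n => by positivity) _ hsum
    intro n
    have hre : (2*(Real.pi:ℂ)*I*(n:ℂ)*z).re = -(2*Real.pi*n*z.im) := by
      simp [Complex.mul_re, Complex.mul_im]
    have hm : ‖(-1:ℂ)^n‖ = 1 := by
      rw [norm_zpow]
      norm_num
    rw [norm_mul, hm, one_mul, norm_cexp', hre, ← Real.exp_add]
    apply Real.exp_le_exp.mpr
    have k1 : -((n:ℝ) * z.im) ≤ |(n:ℝ)| * |z.im| := abs_le_aux _ _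
    nlinarith [mul_le_mul_of_nonneg_left k1 Real.pi_pos.le, Real.pi_pos]
  case hL =>
    have he : (fun n : ℤ => if Real.pi * (n:ℝ)^2 = 0 then
        (-1:ℂ)^n * cexp (2*(Real.pi:ℂ)*I*(n:ℂ)*z) else 0)
        = fun n : ℤ => if n = 0 then (1:ℂ) else 0 := by
      funext n
      by_cases h : n = 0
      · subst h; simp
      · rw [if_neg, if_neg h]
        exact mul_ne_zero Real.pi_ne_zero (pow_ne_zero _ (by exact_mod_cast h))
    rw [he]
    exact hasSum_ite_eq 0 1
  refine Tendsto.congr (fun t => ?_) key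
  rw [theta4]
  apply tsum_congr
  intro n
  have hexp : ((Real.exp (-(Real.pi * (n:ℝ)^2) * t) : ℝ) : ℂ) =
      cexp ((Real.pi:ℂ) * I * (n:ℂ)^2 * ((t:ℂ)*I)) := by
    rw [Complex.ofReal_exp]
    congr 1
    push_cast
    linear_combination (-(Real.pi:ℂ)*(n:ℂ)^2*(t:ℂ)) * Complex.I_sq
  rw [hexp]
  ring

private lemma theta2_scaled_lim (w : ℂ) :
    Tendsto (fun t : ℝ => ∑' n : ℤ, cexp (2*(Real.pi:ℂ)*I*((n:ℂ)+1/2)*w) *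
        (Real.exp (-(Real.pi * ((n:ℝ)^2+n)) * t) : ℂ)) atTop
      (𝓝 (cexp ((Real.pi:ℂ)*I*w) + cexp (-((Real.pi:ℂ)*I*w)))) := by
  have hnn : ∀ n : ℤ, (0:ℝ) ≤ (n:ℝ)^2 + n := by
    intro n
    have h : (0:ℤ) ≤ n^2 + n := by nlinarith [sq_nonneg (2*n+1), sq_nonneg n]
    have h2 : ((0:ℤ):ℝ) ≤ ((n^2+n : ℤ):ℝ) := by exact_mod_cast h
    push_cast at h2
    linarith
  apply aux_tendsto
  · intro n
    exact mul_nonneg Real.pi_pos.le (hnn n)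
  · have hsum := (summable_pow_mul_jacobiTheta₂_term_bound (|w.im| + 1/2) one_pos 0).mul_left
      (Real.exp (Real.pi * |w.im|))
    simp only [pow_zero, one_mul, Int.cast_abs] at hsum
    apply Summable.of_nonneg_of_le (fun n => by positivity) _ hsum
    intro n
    have hre : (2*(Real.pi:ℂ)*I*((n:ℂ)+1/2)*w).re = -(2*Real.pi*((n:ℝ)+1/2)*w.im) := by
      simp [Complex.mul_re, Complex.mul_im]
    rw [norm_cexp', hre, ← Real.exp_add, ← Real.exp_add]
    apply Real.exp_le_exp.mpr
    have k1 : -((n:ℝ) * w.im) ≤ |(n:ℝ)| * |w.im| := abs_le_aux _ _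
    have k2 : -w.im ≤ |w.im| := neg_le_abs _
    have k3 : -(n:ℝ) ≤ |(n:ℝ)| := neg_le_abs _
    nlinarith [mul_le_mul_of_nonneg_left k1 Real.pi_pos.le,
      mul_le_mul_of_nonneg_left k2 Real.pi_pos.le,
      mul_le_mul_of_nonneg_left k3 Real.pi_pos.le]
  · have he : (fun n : ℤ => if Real.pi * ((n:ℝ)^2+n) = 0 then
        cexp (2*(Real.pi:ℂ)*I*((n:ℂ)+1/2)*w) else 0)
        = (fun n : ℤ => if n = 0 then cexp ((Real.pi:ℂ)*I*w) else 0)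
          + (fun n : ℤ => if n = -1 then cexp (-((Real.pi:ℂ)*I*w)) else 0) := by
      funext n
      simp only [Pi.add_apply]
      by_cases h0 : n = 0
      · subst h0
        rw [if_pos (by norm_num), if_pos rfl, if_neg (by decide), add_zero]
        congr 1
        push_cast
        ring
      · by_cases h1 : n = -1
        · subst h1
          rw [if_pos (by norm_num), if_neg (by decide), if_pos rfl, zero_add]
          congr 1
          push_cast
          ring
        · rw [if_neg, if_neg h0, if_neg h1, add_zero]
          have hz : (n:ℤ)^2 + n ≠ 0 := by
            have := mul_ne_zero h0 (show n + 1 ≠ 0 by omega)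
            intro hc
            apply this
            linarith [hc]
          refine mul_ne_zero Real.pi_ne_zero ?_
          intro hc
          apply hz
          have : ((n^2 + n : ℤ) : ℝ) = 0 := by push_cast; linarith [hc]
          exact_mod_cast this
    rw [he]
    exact (hasSum_ite_eq 0 _).add (hasSum_ite_eq (-1) _)

private lemma theta2_eq (w : ℂ) (t : ℝ) : theta2 ((t:ℂ)*I) w =
    (Real.exp (-(Real.pi/4)*t) : ℂ) * ∑' n : ℤ, cexp (2*(Real.pi:ℂ)*I*((n:ℂ)+1/2)*w) *
      (Real.exp (-(Real.pi*((n:ℝ)^2+n)) * t) : ℂ) := by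
  rw [theta2, ← tsum_mul_left]
  apply tsum_congr
  intro n
  have hexp : cexp ((Real.pi:ℂ) * I * ((n:ℂ)+1/2)^2 * ((t:ℂ)*I)) =
      (Real.exp (-(Real.pi/4)*t):ℂ) * (Real.exp (-(Real.pi*((n:ℝ)^2+n)) * t) : ℂ) := by
    rw [← Complex.ofReal_mul, ← Real.exp_add, Complex.ofReal_exp]
    congr 1
    push_cast
    linear_combination ((Real.pi:ℂ)*((n:ℂ)+1/2)^2*(t:ℂ)) * Complex.I_sq
  rw [hexp]
  ring

private lemma theta2_ratio_lim (z : ℂ) :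
    Tendsto (fun t : ℝ => theta2 ((t:ℂ)*I) z / theta2 ((t:ℂ)*I) 0) atTop
      (𝓝 ((cexp ((Real.pi:ℂ)*I*z) + cexp (-((Real.pi:ℂ)*I*z)))/2)) := by
  have hd := theta2_scaled_lim 0
  rw [show cexp ((Real.pi:ℂ)*I*0) + cexp (-((Real.pi:ℂ)*I*0)) = 2 by norm_num] at hd
  have key := (theta2_scaled_lim z).div hd two_ne_zero
  refine Tendsto.congr (fun t => ?_) key
  simp only [Pi.div_apply]
  rw [theta2_eq, theta2_eq,
    mul_div_mul_left _ _ (Complex.ofReal_ne_zero.mpr (Real.exp_ne_zero _))]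

end PhiAux

/-- The q⁰-coefficient of φ_{0,1}³ is y⁻³ + 30y⁻² + 303y⁻¹ + 1060 + 303y + 30y² + y³. -/
theorem phi01_cube_q0_coefficient (z : ℂ) :
    Filter.Tendsto (fun t : ℝ => phi01 ((t : ℂ) * Complex.I) z ^ 3) Filter.atTop
      (nhds ((Complex.exp (2 * Real.pi * Complex.I * z))⁻¹ ^ 3 +
        30 * (Complex.exp (2 * Real.pi * Complex.I * z))⁻¹ ^ 2 +
        303 * (Complex.exp (2 * Real.pi * Complex.I * z))⁻¹ + 1060 +
        303 * Complex.exp (2 * Real.pi * Complex.I * z) +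
        30 * Complex.exp (2 * Real.pi * Complex.I * z) ^ 2 +
        Complex.exp (2 * Real.pi * Complex.I * z) ^ 3)) := by
  have h2 := theta2_ratio_lim z
  have h3 := (theta3_lim z).div (theta3_lim 0) one_ne_zero
  have h4 := (theta4_lim z).div (theta4_lim 0) one_ne_zero
  have hphi : Filter.Tendsto (fun t : ℝ => phi01 ((t : ℂ) * Complex.I) z) Filter.atTop
      (nhds (4 * (((Complex.exp ((Real.pi:ℂ)*Complex.I*z) +
        Complex.exp (-((Real.pi:ℂ)*Complex.I*z)))/2)^2 + ((1:ℂ)/1)^2 + ((1:ℂ)/1)^2))) := by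
    have := (((h2.pow 2).add (h3.pow 2)).add (h4.pow 2)).const_mul (4:ℂ)
    refine Tendsto.congr (fun t => ?_) this
    rw [phi01]
    simp only [Pi.div_apply]
  have key := hphi.pow 3
  have hu : Complex.exp (2 * (Real.pi:ℂ) * Complex.I * z) =
      Complex.exp ((Real.pi:ℂ)*Complex.I*z) * Complex.exp ((Real.pi:ℂ)*Complex.I*z) := by
    rw [← Complex.exp_add]
    congr 1
    ring
  have hval : (4 * (((Complex.exp ((Real.pi:ℂ)*Complex.I*z) +
      Complex.exp (-((Real.pi:ℂ)*Complex.I*z)))/2)^2 + ((1:ℂ)/1)^2 + ((1:ℂ)/1)^2))^3 =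
      (Complex.exp (2 * Real.pi * Complex.I * z))⁻¹ ^ 3 +
        30 * (Complex.exp (2 * Real.pi * Complex.I * z))⁻¹ ^ 2 +
        303 * (Complex.exp (2 * Real.pi * Complex.I * z))⁻¹ + 1060 +
        303 * Complex.exp (2 * Real.pi * Complex.I * z) +
        30 * Complex.exp (2 * Real.pi * Complex.I * z) ^ 2 +
        Complex.exp (2 * Real.pi * Complex.I * z) ^ 3 := by
    rw [Complex.exp_neg, hu]
    have hv : Complex.exp ((Real.pi:ℂ)*Complex.I*z) ≠ 0 := Complex.exp_ne_zero _
    field_simp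
    ring
  rw [hval] at key
  exact key
end

section
/- For every z ∈ ℂ with e^{2πiz} ≠ 1, with y = e^{2πiz}, the function e^{πiz}·E₄(it)·(θ₁(it,2z)/θ₁(it,z))·φ_{−2,1}(it,z) tends to y⁻¹ − 1 − y + y² as the real parameter t tends to +∞; that is, the q⁰-coefficient of y^{1/2} times the basis element of weak Jacobi forms of weight 2 and index 5/2 is y⁻¹ − 1 − y + y². -/
open Complex Filter Topology

/-! ### Auxiliary definitions and lemmas -/

/-- The scaled theta sum: `θ₁(it, z) = -i·e^{-πt/4}·thS z t`. -/
noncomputable def thS (z : ℂ) (t : ℝ) : ℂ :=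
  ∑' n : ℤ, (-1 : ℂ) ^ n * (Real.exp (-(Real.pi * t) * ((n : ℝ) ^ 2 + n)) : ℂ) *
    Complex.exp (2 * Real.pi * Complex.I * ((n : ℂ) + 1 / 2) * z)

/-- The eta infinite product at `τ = it`. -/
noncomputable def etaProd (t : ℝ) : ℂ :=
  ∏' n : ℕ, (1 - Complex.exp (2 * Real.pi * Complex.I * ((n : ℂ) + 1) * ((t : ℂ) * Complex.I)))

lemma tendsto_rexp_neg_mul (a : ℝ) (ha : 0 < a) :
    Filter.Tendsto (fun t : ℝ => Real.exp (-(Real.pi * t) * a)) Filter.atTop (nhds 0) := by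
  have h1 : Filter.Tendsto (fun t : ℝ => (Real.pi * a) * t) Filter.atTop Filter.atTop :=
    Filter.Tendsto.const_mul_atTop (by positivity) tendsto_id
  have h2 := (Real.tendsto_exp_neg_atTop_nhds_zero).comp h1
  convert h2 using 2 with t
  simp [Function.comp]
  ring

lemma tendsto_cexp_neg_mul (a : ℝ) (ha : 0 < a) :
    Filter.Tendsto (fun t : ℝ => ((Real.exp (-(Real.pi * t) * a) : ℝ) : ℂ))
      Filter.atTop (nhds 0) := by
  have h := (Complex.continuous_ofReal.tendsto 0).comp (tendsto_rexp_neg_mul a ha)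
  rw [show ((0 : ℝ) : ℂ) = 0 from Complex.ofReal_zero] at h
  exact h

lemma exp_nat_term (t : ℝ) (n : ℕ) :
    Complex.exp (2 * Real.pi * Complex.I * ((n : ℂ) + 1) * ((t : ℂ) * Complex.I)) =
      ((Real.exp (-(Real.pi * t) * (2 * ((n : ℝ) + 1))) : ℝ) : ℂ) := by
  rw [Complex.ofReal_exp]
  congr 1
  push_cast
  linear_combination (2 * (Real.pi : ℂ) * t * ((n : ℂ) + 1)) * Complex.I_mul_I

lemma rexp_small (t : ℝ) (ht : 1 ≤ t) (n : ℕ) :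
    Real.exp (-(Real.pi * t) * (2 * ((n : ℝ) + 1))) ≤ 1 / 2 := by
  have h2e : (2 : ℝ) ≤ Real.exp 1 := by have := Real.add_one_le_exp 1; linarith
  have hpi := Real.pi_gt_three
  have hn : (1 : ℝ) ≤ (n : ℝ) + 1 := by
    have : (0 : ℝ) ≤ (n : ℝ) := Nat.cast_nonneg n
    linarith
  have harg : -(Real.pi * t) * (2 * ((n : ℝ) + 1)) ≤ -1 := by
    have h1 : 1 ≤ Real.pi * t := by nlinarith
    have h2 : (2 : ℝ) ≤ 2 * ((n : ℝ) + 1) := by linarith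
    have h3 : (1 : ℝ) * 2 ≤ (Real.pi * t) * (2 * ((n : ℝ) + 1)) :=
      mul_le_mul h1 h2 (by norm_num) (by linarith)
    nlinarith
  calc Real.exp (-(Real.pi * t) * (2 * ((n : ℝ) + 1))) ≤ Real.exp (-1) :=
        Real.exp_le_exp.mpr harg
    _ = (Real.exp 1)⁻¹ := Real.exp_neg 1
    _ ≤ 2⁻¹ := inv_anti₀ (by norm_num) h2e
    _ = 1 / 2 := by norm_num

lemma rexp_mono_bound (t : ℝ) (ht : 1 ≤ t) (n : ℕ) :
    Real.exp (-(Real.pi * t) * (2 * ((n : ℝ) + 1))) ≤ Real.exp (-(2 * Real.pi)) ^ (n + 1) := by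
  have hpi := Real.pi_pos
  have hn : (0 : ℝ) ≤ (n : ℝ) := Nat.cast_nonneg n
  rw [← Real.exp_nat_mul]
  apply Real.exp_le_exp.mpr
  push_cast
  have key := mul_le_mul_of_nonneg_right
    (by nlinarith : 2 * Real.pi ≤ 2 * Real.pi * t) (by positivity : (0 : ℝ) ≤ (n : ℝ) + 1)
  nlinarith [key]

lemma summable_geom_shift : Summable (fun n : ℕ => Real.exp (-(2 * Real.pi)) ^ (n + 1)) := by
  have h0 : (0 : ℝ) ≤ Real.exp (-(2 * Real.pi)) := (Real.exp_pos _).le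
  have h1 : Real.exp (-(2 * Real.pi)) < 1 := by
    rw [Real.exp_lt_one_iff]
    have := Real.pi_pos; linarith
  have := (summable_geometric_of_lt_one h0 h1).mul_right (Real.exp (-(2 * Real.pi)))
  exact this.congr fun n => by rw [← pow_succ]

lemma theta1_eq (t : ℝ) (z : ℂ) :
    theta1 ((t : ℂ) * Complex.I) z =
      -Complex.I * ((Real.exp (-(Real.pi * t) / 4) : ℝ) * thS z t) := by
  rw [theta1, thS]
  have key : ∀ n : ℤ, (-1 : ℂ) ^ n *
      Complex.exp (Real.pi * Complex.I * ((n : ℂ) + 1 / 2) ^ 2 * ((t : ℂ) * Complex.I)) *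
      Complex.exp (2 * Real.pi * Complex.I * ((n : ℂ) + 1 / 2) * z) =
      ((Real.exp (-(Real.pi * t) / 4) : ℝ) : ℂ) *
        ((-1 : ℂ) ^ n * (Real.exp (-(Real.pi * t) * ((n : ℝ) ^ 2 + n)) : ℂ) *
          Complex.exp (2 * Real.pi * Complex.I * ((n : ℂ) + 1 / 2) * z)) := by
    intro n
    have h1 : Complex.exp (Real.pi * Complex.I * ((n : ℂ) + 1 / 2) ^ 2 * ((t : ℂ) * Complex.I)) =
        Complex.exp ((-(Real.pi * t) / 4 : ℝ) : ℂ) *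
          Complex.exp ((-(Real.pi * t) * ((n : ℝ) ^ 2 + n) : ℝ) : ℂ) := by
      rw [← Complex.exp_add]
      congr 1
      push_cast
      linear_combination (Real.pi * (t : ℂ) * ((n : ℂ) ^ 2 + n + 1 / 4)) * Complex.I_mul_I
    rw [h1, Complex.ofReal_exp, Complex.ofReal_exp]
    ring
  rw [tsum_congr key, tsum_mul_left]

lemma thS_tendsto (z : ℂ) :
    Filter.Tendsto (thS z) Filter.atTop (nhds (Complex.exp (Real.pi * Complex.I * z) -
      Complex.exp (-(Real.pi * Complex.I * z)))) := by
  set c : ℤ → ℂ := fun n => Complex.exp (2 * Real.pi * Complex.I * ((n : ℂ) + 1 / 2) * z) with hc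
  set g : ℤ → ℂ := fun n => if n = 0 then c 0 else if n = -1 then -c (-1) else 0 with hg
  set S : ℝ := |z.im| with hS
  have habs : ∀ (t : ℝ) (n : ℤ),
      ‖(-1 : ℂ) ^ n * (Real.exp (-(Real.pi * t) * ((n : ℝ) ^ 2 + n)) : ℂ) * c n‖ =
        Real.exp (-(Real.pi * t) * ((n : ℝ) ^ 2 + n)) *
          Real.exp (-(2 * Real.pi * ((n : ℝ) + 1 / 2) * z.im)) := by
    intro t n
    have hre : (2 * (Real.pi : ℂ) * Complex.I * ((n : ℂ) + 1 / 2) * z) =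
        ((2 * Real.pi * ((n : ℝ) + 1 / 2) : ℝ) : ℂ) * (Complex.I * z) := by
      push_cast; ring
    rw [hc]
    simp only [norm_mul, norm_zpow, norm_neg, norm_one, one_zpow, one_mul,
      Complex.norm_real, Real.norm_eq_abs,
      abs_of_pos (Real.exp_pos _), Complex.norm_exp, hre]
    congr 2
    have hIz : (Complex.I * z).re = -z.im := by simp
    rw [Complex.re_ofReal_mul, hIz]
    ring
  have hbound_summable : Summable (fun n : ℤ =>
      Real.exp (2 * Real.pi * S) *
        Real.exp (-Real.pi * ((n : ℝ) ^ 2 - 2 * ((1 + 2 * S) / 2) * |(n : ℝ)|))) := by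
    have h := summable_pow_mul_jacobiTheta₂_term_bound ((1 + 2 * S) / 2) one_pos 0
    simp only [pow_zero, one_mul, Int.cast_abs] at h
    exact h.mul_left _
  have hpt : ∀ n : ℤ, Filter.Tendsto (fun t : ℝ => (-1 : ℂ) ^ n *
      (Real.exp (-(Real.pi * t) * ((n : ℝ) ^ 2 + n)) : ℂ) * c n) Filter.atTop (nhds (g n)) := by
    intro n
    rcases eq_or_ne n 0 with rfl | h0
    · have he : (fun t : ℝ => (-1 : ℂ) ^ (0 : ℤ) *
          (Real.exp (-(Real.pi * t) * (((0 : ℤ) : ℝ) ^ 2 + ((0 : ℤ) : ℝ))) : ℂ) * c 0) =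
          fun _ => c 0 := by
        funext t; norm_num
      rw [he, hg]
      simp only [if_pos rfl]
      exact tendsto_const_nhds
    rcases eq_or_ne n (-1) with rfl | h1
    · have he : (fun t : ℝ => (-1 : ℂ) ^ (-1 : ℤ) *
          (Real.exp (-(Real.pi * t) * (((-1 : ℤ) : ℝ) ^ 2 + ((-1 : ℤ) : ℝ))) : ℂ) * c (-1)) =
          fun _ => -c (-1) := by
        funext t; norm_num
      rw [he, hg]
      norm_num
    · have hz' : (0 : ℤ) < n ^ 2 + n := by
        rcases (by omega : 1 ≤ n ∨ n ≤ -2) with h | h <;> nlinarith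
      have ha : (0 : ℝ) < (n : ℝ) ^ 2 + n := by exact_mod_cast hz'
      have h2 := ((tendsto_cexp_neg_mul _ ha).const_mul ((-1 : ℂ) ^ n)).mul_const (c n)
      have hgn : g n = 0 := by rw [hg]; simp [h0, h1]
      rw [hgn]
      simpa using h2
  have hbd : ∀ᶠ t : ℝ in Filter.atTop, ∀ n : ℤ,
      ‖(-1 : ℂ) ^ n * (Real.exp (-(Real.pi * t) * ((n : ℝ) ^ 2 + n)) : ℂ) * c n‖ ≤
        Real.exp (2 * Real.pi * S) *
          Real.exp (-Real.pi * ((n : ℝ) ^ 2 - 2 * ((1 + 2 * S) / 2) * |(n : ℝ)|)) := by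
    filter_upwards [Filter.eventually_ge_atTop (1 : ℝ)] with t ht n
    rw [habs t n, ← Real.exp_add, ← Real.exp_add]
    apply Real.exp_le_exp.mpr
    have hn2 : (0 : ℝ) ≤ (n : ℝ) ^ 2 + n := by
      have : (0 : ℤ) ≤ n ^ 2 + n := by nlinarith [sq_nonneg (2 * n + 1)]
      exact_mod_cast this
    have hpi := Real.pi_pos
    have h1 : -(Real.pi * t) * ((n : ℝ) ^ 2 + n) ≤ -(Real.pi * 1) * ((n : ℝ) ^ 2 + n) := by
      have := mul_le_mul_of_nonneg_right (by nlinarith : Real.pi * 1 ≤ Real.pi * t) hn2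
      linarith
    have h2 : -(2 * Real.pi * ((n : ℝ) + 1 / 2) * z.im) ≤
        2 * Real.pi * (|(n : ℝ)| + 1 / 2) * S := by
      have ha1 : -(((n : ℝ) + 1 / 2) * z.im) ≤ |((n : ℝ) + 1 / 2) * z.im| := neg_le_abs _
      have ha2 : |((n : ℝ) + 1 / 2) * z.im| ≤ (|(n : ℝ)| + 1 / 2) * S := by
        rw [abs_mul, hS]
        apply mul_le_mul_of_nonneg_right _ (abs_nonneg _)
        calc |(n : ℝ) + 1 / 2| ≤ |(n : ℝ)| + |(1 / 2 : ℝ)| := abs_add_le _ _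
          _ = |(n : ℝ)| + 1 / 2 := by norm_num
      nlinarith
    have h3 : -(n : ℝ) ≤ |(n : ℝ)| := neg_le_abs _
    have h4 : Real.pi * (-(n : ℝ)) ≤ Real.pi * |(n : ℝ)| := mul_le_mul_of_nonneg_left h3 hpi.le
    have h5 : 0 ≤ Real.pi * S := mul_nonneg hpi.le (by rw [hS]; exact abs_nonneg _)
    nlinarith
  have key := tendsto_tsum_of_dominated_convergence hbound_summable hpt hbd
  have hgsum : ∑' n, g n = Complex.exp (Real.pi * Complex.I * z) -
      Complex.exp (-(Real.pi * Complex.I * z)) := by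
    have h0 : ∀ b : ℤ, b ∉ ({0, -1} : Finset ℤ) → g b = 0 := by
      intro b hb
      simp only [Finset.mem_insert, Finset.mem_singleton, not_or] at hb
      rw [hg]
      simp only [if_neg hb.1, if_neg hb.2]
    have hc0 : c 0 = Complex.exp (Real.pi * Complex.I * z) := by
      have hr : c 0 = Complex.exp (2 * Real.pi * Complex.I * (((0 : ℤ) : ℂ) + 1 / 2) * z) := rfl
      rw [hr]; congr 1; push_cast; ring
    have hcm1 : c (-1) = Complex.exp (-(Real.pi * Complex.I * z)) := by
      have hr : c (-1) =
          Complex.exp (2 * Real.pi * Complex.I * (((-1 : ℤ) : ℂ) + 1 / 2) * z) := rfl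
      rw [hr]; congr 1; push_cast; ring
    rw [tsum_eq_sum h0, Finset.sum_insert (by decide), Finset.sum_singleton, hg]
    norm_num [hc0, hcm1]
    rw [sub_eq_add_neg]
  rw [← hgsum]
  exact key

lemma etaProd_tendsto : Filter.Tendsto etaProd Filter.atTop (nhds 1) := by
  set v : ℝ → ℕ → ℂ := fun t n =>
    -Complex.exp (2 * Real.pi * Complex.I * ((n : ℂ) + 1) * ((t : ℂ) * Complex.I)) with hv
  have hvnorm : ∀ t n, ‖v t n‖ = Real.exp (-(Real.pi * t) * (2 * ((n : ℝ) + 1))) := by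
    intro t n
    rw [hv]
    simp only [norm_neg, exp_nat_term, Complex.norm_real, Real.norm_eq_abs,
      abs_of_pos (Real.exp_pos _)]
  have hvsmall : ∀ t, 1 ≤ t → ∀ n, ‖v t n‖ ≤ 1 / 2 := fun t ht n => by
    rw [hvnorm]; exact rexp_small t ht n
  have hne : ∀ t, 1 ≤ t → ∀ n, (1 : ℂ) + v t n ≠ 0 := by
    intro t ht n h
    have hm : v t n = -1 := by linear_combination h
    have hs := hvsmall t ht n
    rw [hm, norm_neg, norm_one] at hs
    linarith
  have hlogbd : ∀ t, 1 ≤ t → ∀ n, ‖Complex.log (1 + v t n)‖ ≤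
      3 / 2 * Real.exp (-(2 * Real.pi)) ^ (n + 1) := by
    intro t ht n
    calc ‖Complex.log (1 + v t n)‖ ≤ 3 / 2 * ‖v t n‖ :=
          Complex.norm_log_one_add_half_le_self (hvsmall t ht n)
      _ ≤ 3 / 2 * Real.exp (-(2 * Real.pi)) ^ (n + 1) := by
          rw [hvnorm]
          have := rexp_mono_bound t ht n
          linarith
  have hlogsummable : ∀ t, 1 ≤ t → Summable (fun n => Complex.log (1 + v t n)) := by
    intro t ht
    apply Summable.of_norm_bounded (summable_geom_shift.mul_left (3 / 2)) (hlogbd t ht)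
  have hprodeq : ∀ t : ℝ, 1 ≤ t → etaProd t =
      Complex.exp (∑' n : ℕ, Complex.log (1 + v t n)) := by
    intro t ht
    have hs := (hlogsummable t ht).hasSum.cexp
    have heq : (Complex.exp ∘ fun n => Complex.log (1 + v t n)) = fun n => 1 + v t n :=
      funext fun n => Complex.exp_log (hne t ht n)
    rw [heq] at hs
    rw [etaProd, ← hs.tprod_eq]
    apply tprod_congr
    intro n
    rw [hv, sub_eq_add_neg]
  have hLlim : Filter.Tendsto (fun t : ℝ => ∑' n : ℕ, Complex.log (1 + v t n))
      Filter.atTop (nhds 0) := by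
    have h0 : (0 : ℂ) = ∑' _ : ℕ, (0 : ℂ) := by rw [tsum_zero]
    rw [h0]
    have hbd : ∀ᶠ t : ℝ in Filter.atTop, ∀ n : ℕ, ‖Complex.log (1 + v t n)‖ ≤
        3 / 2 * Real.exp (-(2 * Real.pi)) ^ (n + 1) := by
      filter_upwards [Filter.eventually_ge_atTop (1 : ℝ)] with t ht n
      exact hlogbd t ht n
    refine tendsto_tsum_of_dominated_convergence
      (summable_geom_shift.mul_left (3 / 2)) (fun n => ?_) hbd
    have hv0 : Filter.Tendsto (fun t : ℝ => v t n) Filter.atTop (nhds 0) := by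
      have := (tendsto_cexp_neg_mul (2 * ((n : ℝ) + 1)) (by positivity)).neg
      rw [neg_zero] at this
      apply this.congr
      intro t
      rw [hv]
      simp only [exp_nat_term]
    have h1v : Filter.Tendsto (fun t : ℝ => 1 + v t n) Filter.atTop (nhds 1) := by
      have := hv0.const_add (1 : ℂ)
      simpa using this
    have hcont : ContinuousAt Complex.log 1 :=
      continuousAt_clog Complex.one_mem_slitPlane
    have := hcont.tendsto.comp h1v
    rw [Complex.log_one] at this
    exact this
  have hfinal := (Complex.continuous_exp.tendsto 0).comp hLlim
  rw [Complex.exp_zero] at hfinal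
  refine Filter.Tendsto.congr' ?_ hfinal
  filter_upwards [Filter.eventually_ge_atTop (1 : ℝ)] with t ht
  exact (hprodeq t ht).symm

lemma E4_tendsto : Filter.Tendsto (fun t : ℝ => E4 ((t : ℂ) * Complex.I))
    Filter.atTop (nhds 1) := by
  have hr0 : (0 : ℝ) < Real.exp (-(2 * Real.pi)) := Real.exp_pos _
  have hr1 : Real.exp (-(2 * Real.pi)) < 1 := by
    rw [Real.exp_lt_one_iff]; have := Real.pi_pos; linarith
  set r : ℝ := Real.exp (-(2 * Real.pi)) with hrdef
  have hbs : Summable (fun n : ℕ => ((n : ℝ) + 2) ^ 4 * r ^ (n + 1)) := by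
    have h4 : Summable (fun n : ℕ => (n : ℝ) ^ 4 * r ^ n) :=
      summable_pow_mul_geometric_of_norm_lt_one 4
        (by rw [Real.norm_eq_abs, abs_of_pos hr0]; exact hr1)
    have hshift := (summable_nat_add_iff 2).mpr h4
    have := hshift.mul_left r⁻¹
    apply this.congr
    intro n
    push_cast
    rw [pow_succ, pow_succ]
    field_simp
    ring
  have hsig : ∀ n : ℕ, ‖(∑ d ∈ (n + 1).divisors, (d : ℂ) ^ 3)‖ ≤ ((n : ℝ) + 2) ^ 4 := by
    intro n
    calc ‖(∑ d ∈ (n + 1).divisors, (d : ℂ) ^ 3)‖ ≤ ∑ d ∈ (n + 1).divisors, ‖(d : ℂ) ^ 3‖ :=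
          norm_sum_le _ _
      _ ≤ ∑ _d ∈ (n + 1).divisors, ((n : ℝ) + 2) ^ 3 := by
          apply Finset.sum_le_sum
          intro d hd
          rw [norm_pow, Complex.norm_natCast]
          have hdle : d ≤ n + 1 := Nat.divisor_le hd
          have : (d : ℝ) ≤ (n : ℝ) + 1 := by exact_mod_cast hdle
          have hd0 : (0 : ℝ) ≤ (d : ℝ) := Nat.cast_nonneg d
          apply pow_le_pow_left₀ hd0
          linarith
      _ = ((n + 1).divisors.card : ℝ) * ((n : ℝ) + 2) ^ 3 := by
          rw [Finset.sum_const, nsmul_eq_mul]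
      _ ≤ ((n : ℝ) + 2) * ((n : ℝ) + 2) ^ 3 := by
          apply mul_le_mul_of_nonneg_right _ (by positivity)
          have hcard : (n + 1).divisors.card ≤ n + 2 := by
            have hsub : (n + 1).divisors ⊆ Finset.range (n + 2) := by
              intro d hd
              rw [Finset.mem_range]
              exact Nat.lt_succ_of_le (Nat.divisor_le hd)
            calc (n + 1).divisors.card ≤ (Finset.range (n + 2)).card :=
                  Finset.card_le_card hsub
              _ = n + 2 := Finset.card_range _
          exact_mod_cast hcard
      _ = ((n : ℝ) + 2) ^ 4 := by ring
  have hsum0 : Filter.Tendsto (fun t : ℝ => ∑' n : ℕ, (∑ d ∈ (n + 1).divisors, (d : ℂ) ^ 3) *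
      Complex.exp (2 * Real.pi * Complex.I * ((n : ℂ) + 1) * ((t : ℂ) * Complex.I)))
      Filter.atTop (nhds 0) := by
    have h0 : (0 : ℂ) = ∑' _ : ℕ, (0 : ℂ) := by rw [tsum_zero]
    rw [h0]
    have hbd : ∀ᶠ t : ℝ in Filter.atTop, ∀ n : ℕ,
        ‖(∑ d ∈ (n + 1).divisors, (d : ℂ) ^ 3) *
          Complex.exp (2 * Real.pi * Complex.I * ((n : ℂ) + 1) * ((t : ℂ) * Complex.I))‖ ≤
        ((n : ℝ) + 2) ^ 4 * r ^ (n + 1) := by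
      filter_upwards [Filter.eventually_ge_atTop (1 : ℝ)] with t ht n
      rw [norm_mul, exp_nat_term, Complex.norm_real, Real.norm_eq_abs,
        abs_of_pos (Real.exp_pos _)]
      have h1 := hsig n
      have h2 := rexp_mono_bound t ht n
      have h3 : (0 : ℝ) ≤ Real.exp (-(Real.pi * t) * (2 * ((n : ℝ) + 1))) := (Real.exp_pos _).le
      calc ‖(∑ d ∈ (n + 1).divisors, (d : ℂ) ^ 3)‖ *
            Real.exp (-(Real.pi * t) * (2 * ((n : ℝ) + 1))) ≤
          ((n : ℝ) + 2) ^ 4 * Real.exp (-(Real.pi * t) * (2 * ((n : ℝ) + 1))) :=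
            mul_le_mul_of_nonneg_right h1 h3
        _ ≤ ((n : ℝ) + 2) ^ 4 * r ^ (n + 1) :=
            mul_le_mul_of_nonneg_left h2 (by positivity)
    refine tendsto_tsum_of_dominated_convergence hbs (fun n => ?_) hbd
    have := (tendsto_cexp_neg_mul (2 * ((n : ℝ) + 1)) (by positivity)).const_mul
      (∑ d ∈ (n + 1).divisors, (d : ℂ) ^ 3)
    rw [mul_zero] at this
    apply this.congr
    intro t
    rw [exp_nat_term]
  have hfin := (hsum0.const_mul (240 : ℂ)).const_add (1 : ℂ)
  rw [mul_zero, add_zero] at hfin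
  exact hfin

lemma dedekindEta_eq (t : ℝ) :
    dedekindEta ((t : ℂ) * Complex.I) =
      ((Real.exp (-(Real.pi * t) / 12) : ℝ) : ℂ) * etaProd t := by
  rw [dedekindEta, etaProd]
  congr 1
  rw [Complex.ofReal_exp]
  congr 1
  push_cast
  linear_combination ((Real.pi : ℂ) * t / 12) * Complex.I_mul_I

lemma phim21_eq (t : ℝ) (z : ℂ) :
    phim21 ((t : ℂ) * Complex.I) z = (thS z t) ^ 2 / (etaProd t) ^ 6 := by
  rw [phim21, theta1_eq, dedekindEta_eq]
  set A : ℂ := ((Real.exp (-(Real.pi * t) / 4) : ℝ) : ℂ) with hA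
  set C : ℂ := ((Real.exp (-(Real.pi * t) / 12) : ℝ) : ℂ) with hC
  set E : ℂ := ((Real.exp (-(Real.pi * t) / 2) : ℝ) : ℂ) with hE
  have hA2 : A ^ 2 = E := by
    rw [hA, hE, ← Complex.ofReal_pow]
    congr 1
    rw [← Real.exp_nat_mul]
    congr 1
    ring
  have hC6 : C ^ 6 = E := by
    rw [hC, hE, ← Complex.ofReal_pow]
    congr 1
    rw [← Real.exp_nat_mul]
    congr 1
    ring
  have hnum : -(-Complex.I * (A * thS z t)) ^ 2 = A ^ 2 * (thS z t) ^ 2 := by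
    linear_combination (-(A ^ 2 * (thS z t) ^ 2)) * Complex.I_sq
  rw [hnum, mul_pow, hA2, hC6]
  have hEne : E ≠ 0 := by
    rw [hE]
    exact Complex.ofReal_ne_zero.mpr (Real.exp_ne_zero _)
  exact mul_div_mul_left _ _ hEne

lemma theta1_ratio_eq (t : ℝ) (z : ℂ) :
    theta1 ((t : ℂ) * Complex.I) (2 * z) / theta1 ((t : ℂ) * Complex.I) z =
      thS (2 * z) t / thS z t := by
  rw [theta1_eq, theta1_eq, ← mul_assoc, ← mul_assoc]
  apply mul_div_mul_left
  apply mul_ne_zero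
  · simpa using Complex.I_ne_zero
  · exact Complex.ofReal_ne_zero.mpr (Real.exp_ne_zero _)

/-- The q⁰-coefficient of y^{1/2} times the basis element of weak Jacobi forms of
weight 2 and index 5/2 is y⁻¹ - 1 - y + y²: for every z ∈ ℂ with e^{2πiz} ≠ 1,
e^{πiz}·E₄(it)·(θ₁(it,2z)/θ₁(it,z))·φ_{-2,1}(it,z) → y⁻¹ - 1 - y + y² as t → +∞. -/
theorem basis_weight2_index5half_q0_coefficient (z : ℂ)
    (hz : Complex.exp (2 * Real.pi * Complex.I * z) ≠ 1) :
    Filter.Tendsto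
      (fun t : ℝ => Complex.exp (Real.pi * Complex.I * z) * E4 ((t : ℂ) * Complex.I) *
        (theta1 ((t : ℂ) * Complex.I) (2 * z) / theta1 ((t : ℂ) * Complex.I) z) *
        phim21 ((t : ℂ) * Complex.I) z) Filter.atTop
      (nhds ((Complex.exp (2 * Real.pi * Complex.I * z))⁻¹ - 1 -
        Complex.exp (2 * Real.pi * Complex.I * z) +
        Complex.exp (2 * Real.pi * Complex.I * z) ^ 2)) := by
  set w : ℂ := Complex.exp (Real.pi * Complex.I * z) with hwdef
  have hw : w ≠ 0 := Complex.exp_ne_zero _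
  have hy : Complex.exp (2 * Real.pi * Complex.I * z) = w ^ 2 := by
    rw [hwdef, sq, ← Complex.exp_add]
    congr 1
    ring
  have hinv : Complex.exp (-(Real.pi * Complex.I * z)) = w⁻¹ := by
    rw [Complex.exp_neg, hwdef]
  have hDne : w - w⁻¹ ≠ 0 := by
    intro h
    have h1 : w = w⁻¹ := by linear_combination h
    have h2 : w * w = 1 := by
      nth_rewrite 1 [h1]
      exact inv_mul_cancel₀ hw
    apply hz
    rw [hy, sq, h2]
  have hB : Filter.Tendsto (thS z) Filter.atTop (nhds (w - w⁻¹)) := by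
    have := thS_tendsto z
    rwa [hinv] at this
  have hA : Filter.Tendsto (thS (2 * z)) Filter.atTop (nhds (w ^ 2 - (w ^ 2)⁻¹)) := by
    have h := thS_tendsto (2 * z)
    have e1 : Complex.exp (Real.pi * Complex.I * (2 * z)) = w ^ 2 := by
      rw [hwdef, sq, ← Complex.exp_add]
      congr 1
      ring
    have e2 : Complex.exp (-(Real.pi * Complex.I * (2 * z))) = (w ^ 2)⁻¹ := by
      rw [Complex.exp_neg, e1]
    rwa [e1, e2] at h
  have hP6 : Filter.Tendsto (fun t : ℝ => (etaProd t) ^ 6) Filter.atTop (nhds 1) := by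
    have := etaProd_tendsto.pow 6
    simpa using this
  have hcomb : Filter.Tendsto (fun t : ℝ =>
      w * E4 ((t : ℂ) * Complex.I) * (thS (2 * z) t / thS z t) *
        ((thS z t) ^ 2 / (etaProd t) ^ 6)) Filter.atTop
      (nhds (w * 1 * ((w ^ 2 - (w ^ 2)⁻¹) / (w - w⁻¹)) * ((w - w⁻¹) ^ 2 / 1))) :=
    ((tendsto_const_nhds.mul E4_tendsto).mul (hA.div hB hDne)).mul
      ((hB.pow 2).div hP6 one_ne_zero)
  have hval : w * 1 * ((w ^ 2 - (w ^ 2)⁻¹) / (w - w⁻¹)) * ((w - w⁻¹) ^ 2 / 1) =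
      (Complex.exp (2 * Real.pi * Complex.I * z))⁻¹ - 1 -
        Complex.exp (2 * Real.pi * Complex.I * z) +
        Complex.exp (2 * Real.pi * Complex.I * z) ^ 2 := by
    have hfac : w ^ 2 - (w ^ 2)⁻¹ = (w - w⁻¹) * (w + w⁻¹) := by
      field_simp
      ring
    rw [hfac, mul_div_cancel_left₀ _ hDne, div_one, hy]
    field_simp
    ring
  rw [← hval]
  apply hcomb.congr
  intro t
  rw [theta1_ratio_eq, phim21_eq]
end
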